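/- Let E be a finite-dimensional real inner product space and let f : E → ℝ be a convex, continuously differentiable Lipschitz function such that slope_f(v) ≥ 0 for every unit vector v ∈ E. Then f has almost critical points: for every ε > 0 there exists a point p ∈ E with ‖∇f(p)‖ < ε, i.e. inf_{p ∈ E} ‖∇f(p)‖ = 0. -/

import Mathlib

open Filter

/-- At an interior minimizer of `x ↦ f x + (ε/2)‖x‖` on a closed ball, the
gradient of `f` has norm at most `ε/2`. -/
lemma grad_small_of_isMinOn
    {E : Type*} [NormedAddCommGroup E] [InnerProductSpace ℝ E]
    [FiniteDimensional ℝ E]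
    (f : E → ℝ) (hdiff : ContDiff ℝ 1 f)
    {ε R : ℝ} (hε : 0 < ε) {p : E} (hpR : ‖p‖ < R)
    (hmin : ∀ y ∈ Metric.closedBall (0:E) R, f p + (ε/2)*‖p‖ ≤ f y + (ε/2)*‖y‖) :
    ‖gradient f p‖ ≤ ε/2 := by
  set G := gradient f p with hGdef
  rcases eq_or_ne G 0 with h0 | hGne
  · rw [h0, norm_zero]; positivity
  · have hGpos : 0 < ‖G‖ := norm_pos_iff.mpr hGne
    set u : E := -(‖G‖⁻¹ • G) with hu
    have hunorm : ‖u‖ = 1 := by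
      rw [hu, norm_neg, norm_smul, norm_inv, norm_norm, inv_mul_cancel₀ hGpos.ne']
    have hinner : (inner ℝ G u : ℝ) = -‖G‖ := by
      rw [hu, inner_neg_right, real_inner_smul_right, real_inner_self_eq_norm_sq]
      field_simp
    -- derivative of t ↦ f (p + t • u) at 0 is ⟪G, u⟫ = -‖G‖
    have hgrad : HasGradientAt f G p :=
      ((hdiff.differentiable one_ne_zero) p).hasGradientAt
    have hcurve : HasDerivAt (fun t : ℝ => p + t • u) u 0 := by
      have h1 : HasDerivAt (fun t : ℝ => t • u) ((1:ℝ) • u) 0 :=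
        (hasDerivAt_id (0:ℝ)).smul_const u
      simpa [one_smul] using h1.const_add p
    have hφ : HasDerivAt (fun t : ℝ => f (p + t • u)) (-‖G‖) 0 := by
      have hgrad' : HasFDerivAt f (InnerProductSpace.toDual ℝ E G) (p + (0:ℝ) • u) := by
        simpa using hgrad.hasFDerivAt
      have := hgrad'.comp_hasDerivAt 0 hcurve
      simp [InnerProductSpace.toDual_apply_apply, hinner] at this
      exact this
    -- slope bound on the right
    have hslope : ∀ t ∈ Set.Ioo (0:ℝ) (R - ‖p‖),
        -(ε/2) ≤ slope (fun t : ℝ => f (p + t • u)) 0 t := by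
      intro t ht
      have htpos : 0 < t := ht.1
      have hmem : p + t • u ∈ Metric.closedBall (0:E) R := by
        rw [Metric.mem_closedBall, dist_zero_right]
        calc ‖p + t • u‖ ≤ ‖p‖ + ‖t • u‖ := norm_add_le _ _
          _ = ‖p‖ + t := by rw [norm_smul, hunorm, Real.norm_eq_abs, abs_of_pos htpos, mul_one]
          _ ≤ R := by linarith [ht.2]
      have h1 := hmin _ hmem
      have h2 : ‖p + t • u‖ ≤ ‖p‖ + t := by
        calc ‖p + t • u‖ ≤ ‖p‖ + ‖t • u‖ := norm_add_le _ _
          _ = ‖p‖ + t := by rw [norm_smul, hunorm, Real.norm_eq_abs, abs_of_pos htpos, mul_one]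
      have h3 : f p - (ε/2) * t ≤ f (p + t • u) := by nlinarith
      simp only [slope_def_field, zero_smul, add_zero, sub_zero]
      rw [le_div_iff₀ htpos]
      nlinarith
    have htend : Tendsto (slope (fun t : ℝ => f (p + t • u)) 0) (nhdsWithin 0 (Set.Ioi 0))
        (nhds (-‖G‖)) := by
      have := hasDerivAt_iff_tendsto_slope.mp hφ
      exact this.mono_left (nhdsWithin_mono _ (fun x hx => ne_of_gt hx))
    have hfin : -(ε/2) ≤ -‖G‖ := by
      refine ge_of_tendsto htend ?_
      filter_upwards [Ioo_mem_nhdsGT_of_mem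
        (show (0:ℝ) ∈ Set.Ico (0:ℝ) (R - ‖p‖) from ⟨le_refl _, by linarith⟩)] with t ht
      exact hslope t ht
    linarith

theorem almost_critical_points_of_semistable
    {E : Type*} [NormedAddCommGroup E] [InnerProductSpace ℝ E]
    [FiniteDimensional ℝ E]
    (f : E → ℝ) (hconv : ConvexOn ℝ Set.univ f)
    (hdiff : ContDiff ℝ 1 f)
    (C : NNReal) (hlip : LipschitzWith C f)
    (s : E → ℝ)
    (hs : ∀ v : E, Tendsto (fun t : ℝ => f (t • v) / t) atTop (nhds (s v)))
    (hss : ∀ v : E, ‖v‖ = 1 → 0 ≤ s v) :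
    ∀ ε : ℝ, 0 < ε → ∃ p : E, ‖gradient f p‖ < ε := by
  intro ε hε
  by_contra hcon
  push_neg at hcon
  have hfc : Continuous f := hdiff.continuous
  -- Step B: for each radius n+1, a minimizer of f + (ε/2)‖·‖ lies on the boundary
  have key : ∀ n : ℕ, ∃ p : E, ‖p‖ = (n:ℝ)+1 ∧ f p ≤ f 0 - (ε/2) * ((n:ℝ)+1) := by
    intro n
    set R : ℝ := (n:ℝ)+1 with hR
    have hRpos : (0:ℝ) < R := by positivity
    obtain ⟨p, hpmem, hpmin⟩ := (isCompact_closedBall (0:E) R).exists_isMinOn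
      (Metric.nonempty_closedBall.mpr hRpos.le)
      ((hfc.add (continuous_const.mul continuous_norm)).continuousOn
        (s := Metric.closedBall 0 R))
    have hpmin' : ∀ y ∈ Metric.closedBall (0:E) R, f p + (ε/2)*‖p‖ ≤ f y + (ε/2)*‖y‖ :=
      fun y hy => hpmin hy
    have hple : ‖p‖ ≤ R := by simpa [dist_zero_right] using hpmem
    have hpeq : ‖p‖ = R := by
      by_contra hne
      have hlt : ‖p‖ < R := lt_of_le_of_ne hple hne
      have := grad_small_of_isMinOn f hdiff hε hlt hpmin'
      have := hcon p
      linarith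
    refine ⟨p, hpeq, ?_⟩
    have h0 := hpmin' 0 (Metric.mem_closedBall_self hRpos.le)
    rw [norm_zero, hpeq] at h0
    linarith
  choose p hp1 hp2 using key
  set v : ℕ → E := fun n => ((n:ℝ)+1)⁻¹ • p n with hv
  have hvs : ∀ n, v n ∈ Metric.sphere (0:E) 1 := by
    intro n
    have hn : (0:ℝ) < (n:ℝ)+1 := by positivity
    rw [mem_sphere_zero_iff_norm, hv, norm_smul, norm_inv, Real.norm_eq_abs,
      abs_of_pos hn, hp1 n, inv_mul_cancel₀ hn.ne']
  obtain ⟨v0, hv0mem, φ, hφmono, hφtend⟩ := (isCompact_sphere (0:E) 1).tendsto_subseq hvs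
  -- Step C: along direction v0, f decreases linearly
  have hdec : ∀ t : ℝ, 0 < t → f (t • v0) ≤ f 0 - (ε/2) * t := by
    intro t ht
    have htend : Tendsto (fun n => f (t • v (φ n))) atTop (nhds (f (t • v0))) :=
      (hfc.tendsto _).comp (hφtend.const_smul t)
    refine le_of_tendsto htend ?_
    have hev : ∀ᶠ n in atTop, t ≤ (φ n : ℝ) + 1 := by
      filter_upwards [eventually_ge_atTop ⌈t⌉₊] with n hn
      have h1 : (⌈t⌉₊ : ℝ) ≤ (φ n : ℝ) := by
        exact_mod_cast le_trans hn (hφmono.le_apply)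
      have := Nat.le_ceil t
      linarith
    filter_upwards [hev] with n hn
    set m : ℝ := (φ n : ℝ) + 1 with hm
    have hmpos : 0 < m := by positivity
    have ha : 0 ≤ t / m := by positivity
    have hb : 0 ≤ 1 - t / m := by
      rw [sub_nonneg, div_le_one hmpos]; exact hn
    have hab : t / m + (1 - t / m) = 1 := by ring
    have hcomb := hconv.2 (Set.mem_univ (p (φ n))) (Set.mem_univ (0:E)) ha hb hab
    have heq : (t / m) • p (φ n) + (1 - t / m) • (0:E) = t • v (φ n) := by
      rw [smul_zero, add_zero, hv, smul_smul, div_eq_mul_inv]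
    rw [heq] at hcomb
    have hfp := hp2 (φ n)
    have htm : (t / m) * m = t := by field_simp
    calc f (t • v (φ n)) ≤ (t/m) * f (p (φ n)) + (1 - t/m) * f 0 := hcomb
      _ ≤ (t/m) * (f 0 - (ε/2) * m) + (1 - t/m) * f 0 := by nlinarith
      _ = f 0 - (ε/2) * t := by field_simp; ring
  -- conclude s v0 ≤ -ε/2, contradiction
  have hsle : s v0 ≤ -(ε/2) := by
    have h1 : Tendsto (fun t : ℝ => f 0 / t - ε/2) atTop (nhds (-(ε/2))) := by
      have h2 : Tendsto (fun t : ℝ => f 0 / t) atTop (nhds 0) :=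
        tendsto_const_nhds.div_atTop tendsto_id
      have h3 := h2.sub (tendsto_const_nhds :
        Tendsto (fun _ : ℝ => ε/2) atTop (nhds (ε/2)))
      simpa using h3
    refine le_of_tendsto_of_tendsto (hs v0) h1 ?_
    filter_upwards [eventually_gt_atTop (0:ℝ)] with t ht
    have h3 := hdec t ht
    have h4 : f (t • v0) / t ≤ (f 0 - ε/2 * t) / t := by
      exact div_le_div_of_nonneg_right h3 ht.le
    have h5 : (f 0 - ε/2 * t) / t = f 0 / t - ε/2 := by
      rw [sub_div, mul_div_assoc, div_self (ne_of_gt ht), mul_one]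
    calc f (t • v0) / t ≤ (f 0 - ε/2 * t) / t := h4
      _ = f 0 / t - ε/2 := h5
  have := hss v0 (by simpa [mem_sphere_zero_iff_norm] using hv0mem)
  linarith
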